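/- Let λ, ξ > 0, κ := √(2λ/ξ) and V := κ∂_x + κ⁻¹∂_z. If f : (0,∞) × ℝ³ → ℝ is smooth and satisfies ∂_t f(t,·) = L f(t,·), then pointwise on (0,∞) × ℝ³: ∂_t(e^{2λt}(Vf)²) − L(e^{2λt}(Vf)²) = −2e^{2λt}(Z₀Vf)² ≤ 0. (This is the pointwise form of the exponential concentration estimate (Vf_t)² ≤ e^{−2λt}P_t((Vf₀)²).) -/

import Mathlib

noncomputable section

/-- `ℝ³` with coordinates `(x, y, z) = (w 0, w 1, w 2)`. -/
abbrev Vec3 := Fin 3 → ℝ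

/-- Partial derivative in the `i`-th coordinate direction. -/
noncomputable def pd3 (i : Fin 3) (f : Vec3 → ℝ) (w : Vec3) : ℝ :=
  fderiv ℝ f w (Pi.single i 1)

/-- The Heisenberg field `Z₀ = ∂_x + (y/2)∂_z`. -/
noncomputable def Zh0 (f : Vec3 → ℝ) (w : Vec3) : ℝ :=
  pd3 0 f w + w 1 / 2 * pd3 2 f w

/-- The Heisenberg field `B = ∂_y − (x/2)∂_z`. -/
noncomputable def Bh (f : Vec3 → ℝ) (w : Vec3) : ℝ :=
  pd3 1 f w - w 0 / 2 * pd3 2 f w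

/-- The partial dilation `D₀ = x∂_x`. -/
noncomputable def D0h (f : Vec3 → ℝ) (w : Vec3) : ℝ := w 0 * pd3 0 f w

/-- The generator `L = Z₀² + ξB − λD₀`. -/
noncomputable def Lh (ξ lam : ℝ) (f : Vec3 → ℝ) (w : Vec3) : ℝ :=
  Zh0 (Zh0 f) w + ξ * Bh f w - lam * D0h f w

/-- The field `V = κ∂_x + κ⁻¹∂_z` with `κ = √(2λ/ξ)`. -/
noncomputable def Vh (ξ lam : ℝ) (f : Vec3 → ℝ) (w : Vec3) : ℝ :=
  Real.sqrt (2 * lam / ξ) * pd3 0 f w + (Real.sqrt (2 * lam / ξ))⁻¹ * pd3 2 f w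

namespace HeisenAux

abbrev Sm (g : Vec3 → ℝ) : Prop := ContDiff ℝ (⊤:ℕ∞) g

lemma Sm.dAt {g : Vec3 → ℝ} (hg : Sm g) (w : Vec3) : DifferentiableAt ℝ g w :=
  (hg.differentiable (by simp)) w

lemma contDiff_pd3 {g : Vec3 → ℝ} (hg : Sm g) (i : Fin 3) : Sm (pd3 i g) := by
  have h1 : ContDiff ℝ (⊤:ℕ∞) (fderiv ℝ g) := hg.fderiv_right (by exact_mod_cast le_top)
  exact (ContinuousLinearMap.apply ℝ ℝ (Pi.single i 1 : Vec3)).contDiff.comp h1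

lemma contDiff_coord (j : Fin 3) : Sm (fun y : Vec3 => y j) :=
  (ContinuousLinearMap.proj j : Vec3 →L[ℝ] ℝ).contDiff

lemma contDiff_Zh0 {g : Vec3 → ℝ} (hg : Sm g) : Sm (Zh0 g) :=
  (contDiff_pd3 hg 0).add (((contDiff_coord 1).div_const 2).mul (contDiff_pd3 hg 2))

lemma contDiff_Bh {g : Vec3 → ℝ} (hg : Sm g) : Sm (Bh g) :=
  (contDiff_pd3 hg 1).sub (((contDiff_coord 0).div_const 2).mul (contDiff_pd3 hg 2))

lemma contDiff_D0h {g : Vec3 → ℝ} (hg : Sm g) : Sm (D0h g) :=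
  (contDiff_coord 0).mul (contDiff_pd3 hg 0)

lemma contDiff_Vh {g : Vec3 → ℝ} (ξ lam : ℝ) (hg : Sm g) : Sm (Vh ξ lam g) :=
  (contDiff_const.mul (contDiff_pd3 hg 0)).add (contDiff_const.mul (contDiff_pd3 hg 2))

lemma contDiff_Lh {g : Vec3 → ℝ} (ξ lam : ℝ) (hg : Sm g) : Sm (Lh ξ lam g) :=
  ((contDiff_Zh0 (contDiff_Zh0 hg)).add (contDiff_const.mul (contDiff_Bh hg))).sub
    (contDiff_const.mul (contDiff_D0h hg))

lemma pd3_add {w : Vec3} {g h : Vec3 → ℝ} (hg : DifferentiableAt ℝ g w)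
    (hh : DifferentiableAt ℝ h w) (i : Fin 3) :
    pd3 i (fun y => g y + h y) w = pd3 i g w + pd3 i h w := by
  simp [pd3, fderiv_fun_add hg hh]

lemma pd3_mul {w : Vec3} {g h : Vec3 → ℝ} (hg : DifferentiableAt ℝ g w)
    (hh : DifferentiableAt ℝ h w) (i : Fin 3) :
    pd3 i (fun y => g y * h y) w = pd3 i g w * h w + g w * pd3 i h w := by
  simp [pd3, fderiv_fun_mul hg hh]; ring

lemma pd3_const_mul {w : Vec3} {g : Vec3 → ℝ} (hg : DifferentiableAt ℝ g w) (c : ℝ) (i : Fin 3) :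
    pd3 i (fun y => c * g y) w = c * pd3 i g w := by
  simp [pd3, fderiv_const_mul hg c]

lemma pd3_comb3 {w : Vec3} {A B C : Vec3 → ℝ} (hA : DifferentiableAt ℝ A w)
    (hB : DifferentiableAt ℝ B w) (hC : DifferentiableAt ℝ C w) (c d : ℝ) (i : Fin 3) :
    pd3 i (fun y => A y + c * B y - d * C y) w = pd3 i A w + c * pd3 i B w - d * pd3 i C w := by
  have h1 : DifferentiableAt ℝ (fun y => c * B y) w := hB.const_mul c
  have h2 : DifferentiableAt ℝ (fun y => A y + c * B y) w := hA.add h1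
  have h3 : DifferentiableAt ℝ (fun y => d * C y) w := hC.const_mul d
  have : (fun y => A y + c * B y - d * C y) = fun y => (fun y => A y + c * B y) y - (fun y => d * C y) y := rfl
  rw [this, pd3, fderiv_fun_sub h2 h3]
  show pd3 i (fun y => A y + c * B y) w - pd3 i (fun y => d * C y) w = _
  rw [pd3_add hA h1, pd3_const_mul hB, pd3_const_mul hC]

lemma pd3_coord (i j : Fin 3) (w : Vec3) : pd3 i (fun y => y j) w = (Pi.single i 1 : Vec3) j := by
  have : (fun y : Vec3 => y j) = fun y => (ContinuousLinearMap.proj j : Vec3 →L[ℝ] ℝ) y := rfl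
  rw [pd3, this, ContinuousLinearMap.fderiv]; rfl

lemma pd3_coord_div2 (i j : Fin 3) (w : Vec3) :
    pd3 i (fun y : Vec3 => y j / 2) w = (Pi.single i 1 : Vec3) j / 2 := by
  have h := pd3_mul (w := w) (g := fun y : Vec3 => y j)
    (h := fun _ => (2:ℝ)⁻¹) ((contDiff_coord j).dAt w) (differentiableAt_const _) i
  simp only [div_eq_mul_inv]
  rw [h, pd3_coord]
  simp [pd3]

lemma pd3_snd {w : Vec3} {g : Vec3 → ℝ} (hg : DifferentiableAt ℝ (fderiv ℝ g) w) (i j : Fin 3) :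
    pd3 i (pd3 j g) w = fderiv ℝ (fderiv ℝ g) w (Pi.single i 1) (Pi.single j 1) := by
  have : pd3 j g = fun y => (fderiv ℝ g y) ((fun _ : Vec3 => (Pi.single j 1 : Vec3)) y) := rfl
  rw [pd3, this, fderiv_clm_apply hg (differentiableAt_const _)]
  simp

lemma pd3_comm {g : Vec3 → ℝ} (hg : Sm g) (i j : Fin 3) (w : Vec3) :
    pd3 i (pd3 j g) w = pd3 j (pd3 i g) w := by
  have hd : DifferentiableAt ℝ (fderiv ℝ g) w :=
    (hg.fderiv_right (m := (⊤:ℕ∞)) (by exact_mod_cast le_top)).differentiable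
      (by simp) w
  rw [pd3_snd hd, pd3_snd hd]
  exact (hg.contDiffAt.isSymmSndFDerivAt (by simp; exact WithTop.coe_le_coe.mpr (le_top : (2:ℕ∞) ≤ ⊤))) _ _

variable {g u v : Vec3 → ℝ} {w : Vec3} {ξ lam : ℝ}

lemma pd3_lin (hu : Sm u) (hv : Sm v) (a b : ℝ) (i : Fin 3) (w : Vec3) :
    pd3 i (fun y => a * u y + b * v y) w = a * pd3 i u w + b * pd3 i v w := by
  rw [pd3_add ((hu.dAt w).const_mul a) ((hv.dAt w).const_mul b),
    pd3_const_mul (hu.dAt w), pd3_const_mul (hv.dAt w)]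

lemma Zh0_lin (hu : Sm u) (hv : Sm v) (a b : ℝ) (w : Vec3) :
    Zh0 (fun y => a * u y + b * v y) w = a * Zh0 u w + b * Zh0 v w := by
  unfold Zh0; rw [pd3_lin hu hv, pd3_lin hu hv]; ring

lemma Bh_lin (hu : Sm u) (hv : Sm v) (a b : ℝ) (w : Vec3) :
    Bh (fun y => a * u y + b * v y) w = a * Bh u w + b * Bh v w := by
  unfold Bh; rw [pd3_lin hu hv, pd3_lin hu hv]; ring

lemma D0h_lin (hu : Sm u) (hv : Sm v) (a b : ℝ) (w : Vec3) :
    D0h (fun y => a * u y + b * v y) w = a * D0h u w + b * D0h v w := by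
  unfold D0h; rw [pd3_lin hu hv]; ring

lemma Zh0_add (hu : Sm u) (hv : Sm v) (w : Vec3) :
    Zh0 (fun y => u y + v y) w = Zh0 u w + Zh0 v w := by
  unfold Zh0; rw [pd3_add (hu.dAt w) (hv.dAt w), pd3_add (hu.dAt w) (hv.dAt w)]; ring

lemma Zh0_mul (hu : Sm u) (hv : Sm v) (w : Vec3) :
    Zh0 (fun y => u y * v y) w = Zh0 u w * v w + u w * Zh0 v w := by
  unfold Zh0; rw [pd3_mul (hu.dAt w) (hv.dAt w), pd3_mul (hu.dAt w) (hv.dAt w)]; ring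

lemma Bh_mul (hu : Sm u) (hv : Sm v) (w : Vec3) :
    Bh (fun y => u y * v y) w = Bh u w * v w + u w * Bh v w := by
  unfold Bh; rw [pd3_mul (hu.dAt w) (hv.dAt w), pd3_mul (hu.dAt w) (hv.dAt w)]; ring

lemma D0h_mul (hu : Sm u) (hv : Sm v) (w : Vec3) :
    D0h (fun y => u y * v y) w = D0h u w * v w + u w * D0h v w := by
  unfold D0h; rw [pd3_mul (hu.dAt w) (hv.dAt w)]; ring

lemma Zh0_const_mul (hu : Sm u) (c : ℝ) (w : Vec3) :
    Zh0 (fun y => c * u y) w = c * Zh0 u w := by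
  unfold Zh0; rw [pd3_const_mul (hu.dAt w), pd3_const_mul (hu.dAt w)]; ring

lemma Bh_const_mul (hu : Sm u) (c : ℝ) (w : Vec3) :
    Bh (fun y => c * u y) w = c * Bh u w := by
  unfold Bh; rw [pd3_const_mul (hu.dAt w), pd3_const_mul (hu.dAt w)]; ring

lemma D0h_const_mul (hu : Sm u) (c : ℝ) (w : Vec3) :
    D0h (fun y => c * u y) w = c * D0h u w := by
  unfold D0h; rw [pd3_const_mul (hu.dAt w)]; ring

/-- Expansion of `pd3 i (Zh0 g)`. -/
lemma pd3_Zh0 (hg : Sm g) (i : Fin 3) (w : Vec3) :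
    pd3 i (Zh0 g) w = pd3 i (pd3 0 g) w + (Pi.single i 1 : Vec3) 1 / 2 * pd3 2 g w
      + w 1 / 2 * pd3 i (pd3 2 g) w := by
  have h2 : Sm (pd3 2 g) := contDiff_pd3 hg 2
  have hc : Sm (fun y : Vec3 => y 1 / 2) := (contDiff_coord 1).div_const 2
  have : Zh0 g = fun y => pd3 0 g y + (fun y : Vec3 => y 1 / 2) y * pd3 2 g y := rfl
  rw [this, pd3_add ((contDiff_pd3 hg 0).dAt w) ((hc.dAt w).fun_mul (h2.dAt w)),
    pd3_mul (hc.dAt w) (h2.dAt w), pd3_coord_div2]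
  ring

lemma pd3_Bh (hg : Sm g) (i : Fin 3) (w : Vec3) :
    pd3 i (Bh g) w = pd3 i (pd3 1 g) w - (Pi.single i 1 : Vec3) 0 / 2 * pd3 2 g w
      - w 0 / 2 * pd3 i (pd3 2 g) w := by
  have h2 : Sm (pd3 2 g) := contDiff_pd3 hg 2
  have hc : Sm (fun y : Vec3 => y 0 / 2) := (contDiff_coord 0).div_const 2
  have : Bh g = fun y => pd3 1 g y + (-1 : ℝ) * ((fun y : Vec3 => y 0 / 2) y * pd3 2 g y) := by
    funext y; simp [Bh]; ring
  rw [this, pd3_add ((contDiff_pd3 hg 1).dAt w) (((hc.dAt w).fun_mul (h2.dAt w)).const_mul _),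
    pd3_const_mul ((hc.dAt w).fun_mul (h2.dAt w)), pd3_mul (hc.dAt w) (h2.dAt w), pd3_coord_div2]
  ring

lemma pd3_D0h (hg : Sm g) (i : Fin 3) (w : Vec3) :
    pd3 i (D0h g) w = (Pi.single i 1 : Vec3) 0 * pd3 0 g w + w 0 * pd3 i (pd3 0 g) w := by
  have h0 : Sm (pd3 0 g) := contDiff_pd3 hg 0
  have : D0h g = fun y => (fun y : Vec3 => y 0) y * pd3 0 g y := rfl
  rw [this, pd3_mul ((contDiff_coord 0).dAt w) (h0.dAt w), pd3_coord]

lemma pd30_Zh0 (hg : Sm g) (w : Vec3) : pd3 0 (Zh0 g) w = Zh0 (pd3 0 g) w := by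
  rw [pd3_Zh0 hg, Zh0, pd3_comm hg 0 2]; norm_num

lemma pd32_Zh0 (hg : Sm g) (w : Vec3) : pd3 2 (Zh0 g) w = Zh0 (pd3 2 g) w := by
  rw [pd3_Zh0 hg, Zh0, pd3_comm hg 2 2]; simp [Pi.single_apply, pd3_comm hg 2 0]

lemma pd30_Bh (hg : Sm g) (w : Vec3) : pd3 0 (Bh g) w = Bh (pd3 0 g) w - pd3 2 g w / 2 := by
  rw [pd3_Bh hg, Bh, pd3_comm hg 0 1, pd3_comm hg 0 2]; norm_num; ring

lemma pd32_Bh (hg : Sm g) (w : Vec3) : pd3 2 (Bh g) w = Bh (pd3 2 g) w := by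
  rw [pd3_Bh hg, Bh, pd3_comm hg 2 1, pd3_comm hg 2 2]; simp [Pi.single_apply]

lemma pd30_D0h (hg : Sm g) (w : Vec3) : pd3 0 (D0h g) w = D0h (pd3 0 g) w + pd3 0 g w := by
  rw [pd3_D0h hg, D0h]; norm_num; ring

lemma pd32_D0h (hg : Sm g) (w : Vec3) : pd3 2 (D0h g) w = D0h (pd3 2 g) w := by
  rw [pd3_D0h hg, D0h, pd3_comm hg 2 0]; simp [Pi.single_apply]

lemma Vh_comb3 {A B C : Vec3 → ℝ} (hA : Sm A) (hB : Sm B) (hC : Sm C) (c d : ℝ) (w : Vec3) :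
    Vh ξ lam (fun y => A y + c * B y - d * C y) w
      = Vh ξ lam A w + c * Vh ξ lam B w - d * Vh ξ lam C w := by
  unfold Vh
  rw [pd3_comb3 (hA.dAt w) (hB.dAt w) (hC.dAt w), pd3_comb3 (hA.dAt w) (hB.dAt w) (hC.dAt w)]
  ring

lemma Vh_Zh0Zh0 (hg : Sm g) (w : Vec3) :
    Vh ξ lam (Zh0 (Zh0 g)) w = Zh0 (Zh0 (Vh ξ lam g)) w := by
  set κ := Real.sqrt (2*lam/ξ) with hκ
  have h0 : Sm (pd3 0 g) := contDiff_pd3 hg 0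
  have h2 : Sm (pd3 2 g) := contDiff_pd3 hg 2
  have e0 : pd3 0 (Zh0 g) = Zh0 (pd3 0 g) := funext (pd30_Zh0 hg)
  have e2 : pd3 2 (Zh0 g) = Zh0 (pd3 2 g) := funext (pd32_Zh0 hg)
  have hV : Vh ξ lam g = fun y => κ * pd3 0 g y + κ⁻¹ * pd3 2 g y := rfl
  have eV : Zh0 (Vh ξ lam g) = fun y => κ * Zh0 (pd3 0 g) y + κ⁻¹ * Zh0 (pd3 2 g) y := by
    rw [hV]; exact funext fun y => Zh0_lin h0 h2 κ κ⁻¹ y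
  show κ * pd3 0 (Zh0 (Zh0 g)) w + κ⁻¹ * pd3 2 (Zh0 (Zh0 g)) w = _
  rw [pd30_Zh0 (contDiff_Zh0 hg), pd32_Zh0 (contDiff_Zh0 hg), e0, e2, eV,
    Zh0_lin (contDiff_Zh0 h0) (contDiff_Zh0 h2)]

lemma Vh_Bh (hg : Sm g) (w : Vec3) :
    Vh ξ lam (Bh g) w = Bh (Vh ξ lam g) w - Real.sqrt (2*lam/ξ) / 2 * pd3 2 g w := by
  set κ := Real.sqrt (2*lam/ξ) with hκ
  have h0 : Sm (pd3 0 g) := contDiff_pd3 hg 0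
  have h2 : Sm (pd3 2 g) := contDiff_pd3 hg 2
  have hV : Vh ξ lam g = fun y => κ * pd3 0 g y + κ⁻¹ * pd3 2 g y := rfl
  show κ * pd3 0 (Bh g) w + κ⁻¹ * pd3 2 (Bh g) w = _
  rw [pd30_Bh hg, pd32_Bh hg, hV, Bh_lin h0 h2]
  ring

lemma Vh_D0h (hg : Sm g) (w : Vec3) :
    Vh ξ lam (D0h g) w = D0h (Vh ξ lam g) w + Real.sqrt (2*lam/ξ) * pd3 0 g w := by
  set κ := Real.sqrt (2*lam/ξ) with hκ
  have h0 : Sm (pd3 0 g) := contDiff_pd3 hg 0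
  have h2 : Sm (pd3 2 g) := contDiff_pd3 hg 2
  have hV : Vh ξ lam g = fun y => κ * pd3 0 g y + κ⁻¹ * pd3 2 g y := rfl
  show κ * pd3 0 (D0h g) w + κ⁻¹ * pd3 2 (D0h g) w = _
  rw [pd30_D0h hg, pd32_D0h hg, hV, D0h_lin h0 h2]
  ring

lemma Vh_Lh (hξ : 0 < ξ) (hlam : 0 < lam) (hg : Sm g) (w : Vec3) :
    Vh ξ lam (Lh ξ lam g) w = Lh ξ lam (Vh ξ lam g) w - lam * Vh ξ lam g w := by
  set κ := Real.sqrt (2*lam/ξ) with hκ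
  have hκpos : 0 < κ := Real.sqrt_pos.2 (by positivity)
  have hκ2 : κ^2 = 2*lam/ξ := Real.sq_sqrt (by positivity)
  have key : ξ * κ / 2 = lam * κ⁻¹ := by
    have h : ξ * κ ^ 2 = 2 * lam := by rw [hκ2]; field_simp
    field_simp
    linear_combination h
  have hL : Lh ξ lam g = fun y => Zh0 (Zh0 g) y + ξ * Bh g y - lam * D0h g y := rfl
  have hVg : Vh ξ lam g w = κ * pd3 0 g w + κ⁻¹ * pd3 2 g w := rfl
  rw [hL, Vh_comb3 (contDiff_Zh0 (contDiff_Zh0 hg)) (contDiff_Bh hg) (contDiff_D0h hg),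
    Vh_Zh0Zh0 hg, Vh_Bh hg, Vh_D0h hg]
  simp only [Lh, hVg, ← hκ]
  linear_combination (- pd3 2 g w) * key

lemma Lh_sq (hg : Sm g) (w : Vec3) :
    Lh ξ lam (fun y => g y ^ 2) w = 2 * g w * Lh ξ lam g w + 2 * (Zh0 g w)^2 := by
  have hZ : Sm (Zh0 g) := contDiff_Zh0 hg
  have e1 : (fun y => g y ^ 2) = fun y => g y * g y := by funext y; ring
  have eZ : Zh0 (fun y => g y * g y) = fun y => Zh0 g y * g y + g y * Zh0 g y :=
    funext (Zh0_mul hg hg)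
  rw [Lh, e1, eZ, Zh0_add (hZ.mul hg) (hg.mul hZ), Zh0_mul hZ hg, Zh0_mul hg hZ,
    Bh_mul hg hg, D0h_mul hg hg]
  simp only [Lh]; ring

lemma Lh_const_mul (hg : Sm g) (c : ℝ) (w : Vec3) :
    Lh ξ lam (fun y => c * g y) w = c * Lh ξ lam g w := by
  have eZ : Zh0 (fun y => c * g y) = fun y => c * Zh0 g y := funext (Zh0_const_mul hg c)
  rw [Lh, eZ, Zh0_const_mul (contDiff_Zh0 hg) c, Bh_const_mul hg, D0h_const_mul hg]
  simp only [Lh]; ring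

end HeisenAux

open HeisenAux

/-- Exponential concentration in pointwise form: along any smooth solution of
`∂_t f = Lf` on `(0,∞) × ℝ³` one has
`∂_t(e^{2λt}(Vf)²) − L(e^{2λt}(Vf)²) = −2e^{2λt}(Z₀Vf)² ≤ 0`. -/
theorem heisenberg_concentration (ξ lam : ℝ) (hξ : 0 < ξ) (hlam : 0 < lam)
    (f : ℝ → Vec3 → ℝ)
    (hf : ContDiffOn ℝ (⊤ : ℕ∞) (fun p : ℝ × Vec3 => f p.1 p.2)
      (Set.Ioi (0 : ℝ) ×ˢ (Set.univ : Set Vec3)))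
    (heq : ∀ t : ℝ, 0 < t → ∀ w : Vec3, deriv (fun s => f s w) t = Lh ξ lam (f t) w) :
    ∀ t : ℝ, 0 < t → ∀ w : Vec3,
      (deriv (fun s => Real.exp (2 * lam * s) * (Vh ξ lam (f s) w) ^ 2) t
          - Lh ξ lam (fun y => Real.exp (2 * lam * t) * (Vh ξ lam (f t) y) ^ 2) w
        = -2 * Real.exp (2 * lam * t) * (Zh0 (Vh ξ lam (f t)) w) ^ 2) ∧
      deriv (fun s => Real.exp (2 * lam * s) * (Vh ξ lam (f s) w) ^ 2) t
          - Lh ξ lam (fun y => Real.exp (2 * lam * t) * (Vh ξ lam (f t) y) ^ 2) w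
        ≤ 0 := by
  intro t ht w
  set U := Set.Ioi (0:ℝ) ×ˢ (Set.univ : Set Vec3) with hUdef
  have hU : IsOpen U := isOpen_Ioi.prod isOpen_univ
  set F : ℝ × Vec3 → ℝ := fun p => f p.1 p.2 with hFdef
  have hF : ContDiffOn ℝ (⊤:ℕ∞) F U := hf
  have hmem : ∀ s : ℝ, 0 < s → ∀ y : Vec3, (s, y) ∈ U := fun s hs y => ⟨hs, trivial⟩
  have hFd : ∀ q ∈ U, HasFDerivAt F (fderiv ℝ F q) q := fun q hq =>
    (((hF.differentiableOn (by simp)) q hq).differentiableAt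
      (hU.mem_nhds hq)).hasFDerivAt
  set G := fderiv ℝ F with hGdef
  have hG : ContDiffOn ℝ (⊤:ℕ∞) G U := hF.fderiv_of_isOpen hU (by exact_mod_cast le_top)
  have hGdiff : ∀ q ∈ U, DifferentiableAt ℝ G q := fun q hq =>
    ((hG.differentiableOn (by simp)) q hq).differentiableAt (hU.mem_nhds hq)
  -- smoothness of time slices
  have hSm : ∀ s : ℝ, 0 < s → Sm (f s) := by
    intro s hs
    refine contDiff_iff_contDiffAt.mpr fun y => ?_
    have h1 : ContDiffAt ℝ (⊤:ℕ∞) F (s, y) := hF.contDiffAt (hU.mem_nhds (hmem s hs y))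
    have h2 : ContDiffAt ℝ (⊤:ℕ∞) (fun y : Vec3 => ((s:ℝ), y)) y :=
      contDiffAt_const.prodMk contDiffAt_id
    exact h1.comp y h2
  -- spatial derivatives of slices via G
  have hslice : ∀ s : ℝ, 0 < s → ∀ y : Vec3, ∀ v : Vec3,
      fderiv ℝ (f s) y v = G (s, y) (0, v) := by
    intro s hs y v
    have hJ : HasFDerivAt (fun y : Vec3 => ((s : ℝ), y)) (ContinuousLinearMap.inr ℝ ℝ Vec3) y :=
      (hasFDerivAt_const s y).prodMk (hasFDerivAt_id y)
    have hcomp : HasFDerivAt (f s)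
        ((G (s, y)).comp (ContinuousLinearMap.inr ℝ ℝ Vec3)) y :=
      (hFd (s, y) (hmem s hs y)).comp y hJ
    rw [hcomp.fderiv]
    rfl
  -- time derivatives via G
  have htime : ∀ s : ℝ, 0 < s → ∀ y : Vec3,
      HasDerivAt (fun r => f r y) (G (s, y) (1, 0)) s := by
    intro s hs y
    have hJ : HasDerivAt (fun r : ℝ => (r, y)) ((1:ℝ), (0:Vec3)) s :=
      (hasDerivAt_id s).prodMk (hasDerivAt_const s y)
    exact (hFd (s, y) (hmem s hs y)).comp_hasDerivAt s hJ
  have hft : Sm (f t) := hSm t ht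
  -- the key mixed-derivative lemma
  have hderiv_pd : ∀ i : Fin 3,
      HasDerivAt (fun s => pd3 i (f s) w) (pd3 i (Lh ξ lam (f t)) w) t := by
    intro i
    have hpmem := hmem t ht w
    have hGd : DifferentiableAt ℝ G (t, w) := hGdiff _ hpmem
    have hJ : HasDerivAt (fun r : ℝ => (r, w)) ((1:ℝ), (0:Vec3)) t :=
      (hasDerivAt_id t).prodMk (hasDerivAt_const t w)
    have hb0 : HasDerivAt (fun s => G (s, w)) (fderiv ℝ G (t, w) ((1:ℝ), (0:Vec3))) t :=
      hGd.hasFDerivAt.comp_hasDerivAt t hJ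
    have hb : HasDerivAt (fun s => G (s, w) ((0:ℝ), Pi.single i 1))
        (fderiv ℝ G (t, w) ((1:ℝ), (0:Vec3)) ((0:ℝ), Pi.single i 1)) t := by
      have := hb0.clm_apply (hasDerivAt_const t ((0:ℝ), (Pi.single i 1 : Vec3)))
      simpa using this
    have ev2 : (fun s => pd3 i (f s) w) =ᶠ[nhds t] (fun s => G (s, w) ((0:ℝ), Pi.single i 1)) := by
      filter_upwards [isOpen_Ioi.mem_nhds ht] with s hs
      exact hslice s hs w _
    have hmain : HasDerivAt (fun s => pd3 i (f s) w)
        (fderiv ℝ G (t, w) ((1:ℝ), (0:Vec3)) ((0:ℝ), Pi.single i 1)) t :=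
      hb.congr_of_eventuallyEq ev2
    -- symmetry of second derivative of F
    have ev3 : ∀ᶠ q in nhds ((t : ℝ), w), HasFDerivAt F (G q) q := by
      filter_upwards [hU.mem_nhds hpmem] with q hq using hFd q hq
    have hsym : fderiv ℝ G (t, w) ((1:ℝ), (0:Vec3)) ((0:ℝ), Pi.single i 1)
        = fderiv ℝ G (t, w) ((0:ℝ), Pi.single i 1) ((1:ℝ), (0:Vec3)) :=
      second_derivative_symmetric_of_eventually ev3 hGd.hasFDerivAt _ _
    -- identify the value with pd3 i (Lh (f t)) w
    have hE : Lh ξ lam (f t) = fun y => G (t, y) ((1:ℝ), (0:Vec3)) := by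
      funext y
      rw [← heq t ht y]
      exact (htime t ht y).deriv
    have hGy : HasFDerivAt (fun y : Vec3 => G (t, y))
        ((fderiv ℝ G (t, w)).comp (ContinuousLinearMap.inr ℝ ℝ Vec3)) w :=
      hGd.hasFDerivAt.comp w ((hasFDerivAt_const t w).prodMk (hasFDerivAt_id w))
    have happ : HasFDerivAt (fun y : Vec3 => G (t, y) ((1:ℝ), (0:Vec3)))
        (((fderiv ℝ G (t, w)).comp (ContinuousLinearMap.inr ℝ ℝ Vec3)).flip ((1:ℝ), (0:Vec3))) w := by
      have := hGy.clm_apply (hasFDerivAt_const ((1:ℝ), (0:Vec3)) w)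
      simpa using this
    have hval : pd3 i (Lh ξ lam (f t)) w
        = fderiv ℝ G (t, w) ((0:ℝ), Pi.single i 1) ((1:ℝ), (0:Vec3)) := by
      rw [hE, pd3, happ.fderiv]
      rfl
    rw [hval, ← hsym]
    exact hmain
  -- derivative of s ↦ Vh (f s) w
  set κ := Real.sqrt (2 * lam / ξ) with hκdef
  have hV : HasDerivAt (fun s => Vh ξ lam (f s) w) (Vh ξ lam (Lh ξ lam (f t)) w) t := by
    have h0 := (hderiv_pd 0).const_mul κ
    have h2 := (hderiv_pd 2).const_mul κ⁻¹
    exact h0.add h2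
  -- derivative of the full expression
  have hE2 : HasDerivAt (fun s => Real.exp (2 * lam * s))
      (Real.exp (2 * lam * t) * (2 * lam)) t := by
    have : HasDerivAt (fun s : ℝ => 2 * lam * s) (2 * lam) t := by
      simpa using (hasDerivAt_id t).const_mul (2 * lam)
    exact this.exp
  have hVsq : HasDerivAt (fun s => (Vh ξ lam (f s) w) ^ 2)
      ((2:ℕ) * (Vh ξ lam (f t) w) ^ 1 * Vh ξ lam (Lh ξ lam (f t)) w) t := hV.pow 2
  have hprod := hE2.mul hVsq
  have hderiv : deriv (fun s => Real.exp (2 * lam * s) * (Vh ξ lam (f s) w) ^ 2) t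
      = Real.exp (2 * lam * t) * (2 * lam) * (Vh ξ lam (f t) w) ^ 2
        + Real.exp (2 * lam * t) * ((2:ℕ) * (Vh ξ lam (f t) w) ^ 1
            * Vh ξ lam (Lh ξ lam (f t)) w) := hprod.deriv
  -- spatial identities
  have hVL : Vh ξ lam (Lh ξ lam (f t)) w
      = Lh ξ lam (Vh ξ lam (f t)) w - lam * Vh ξ lam (f t) w := Vh_Lh hξ hlam hft w
  have hVsm : Sm (Vh ξ lam (f t)) := contDiff_Vh ξ lam hft
  have hLc : Lh ξ lam (fun y => Real.exp (2 * lam * t) * (Vh ξ lam (f t) y) ^ 2) w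
      = Real.exp (2 * lam * t) * Lh ξ lam (fun y => (Vh ξ lam (f t) y) ^ 2) w :=
    Lh_const_mul (hVsm.pow 2) _ w
  have hLsq : Lh ξ lam (fun y => (Vh ξ lam (f t) y) ^ 2) w
      = 2 * Vh ξ lam (f t) w * Lh ξ lam (Vh ξ lam (f t)) w
        + 2 * (Zh0 (Vh ξ lam (f t)) w) ^ 2 := Lh_sq hVsm w
  have hmain : deriv (fun s => Real.exp (2 * lam * s) * (Vh ξ lam (f s) w) ^ 2) t
      - Lh ξ lam (fun y => Real.exp (2 * lam * t) * (Vh ξ lam (f t) y) ^ 2) w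
      = -2 * Real.exp (2 * lam * t) * (Zh0 (Vh ξ lam (f t)) w) ^ 2 := by
    rw [hderiv, hLc, hLsq, hVL]
    push_cast
    ring
  refine ⟨hmain, ?_⟩
  rw [hmain]
  have hexp : 0 < Real.exp (2 * lam * t) := Real.exp_pos _
  nlinarith [sq_nonneg (Zh0 (Vh ξ lam (f t)) w), hexp]
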